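/- For every natural number d there exists a digraph G = (V, E) that admits a 2-topological ordering but admits no directed path decomposition of width at most d; that is, graphs of zig-zag number at most 2 have unbounded directed path-width. -/

import Mathlib

/-- `InCut f i u u'` : the pair `(u, u')` crosses the cut at position `i` of the
ordering whose position function is `f`. -/
def InCut {α : Type*} (f : α → ℕ) (i : ℕ) (u u' : α) : Prop :=
  (f u < i ∧ i ≤ f u') ∨ (f u' < i ∧ i ≤ f u)

/-- `IsDiPath E p m` : `p 0, p 1, ..., p m` is a directed simple path in the
digraph with edge set `E`. -/
def IsDiPath {α : Type*} (E : Set (α × α)) (p : ℕ → α) (m : ℕ) : Prop :=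
  (∀ j k, j ≤ m → k ≤ m → p j = p k → j = k) ∧ ∀ j, j < m → (p j, p (j + 1)) ∈ E

/-- `ω` is a `z`-topological ordering of the digraph on `Fin n` with edge set `E`. -/
def IsZTopOrdering {n : ℕ} (E : Set (Fin n × Fin n)) (ω : Fin n ≃ Fin n) (z : ℕ) : Prop :=
  ∀ (p : ℕ → Fin n) (m : ℕ), IsDiPath E p m →
    ∀ i : ℕ,
      Nat.card {j : ℕ // j < m ∧ InCut (fun v => (ω v : ℕ)) i (p j) (p (j + 1))} ≤ z

namespace ZZTree

def adjN (x y : ℕ) : Prop := (y = 2*x ∨ y = 2*x+1) ∨ (x = 2*y ∨ x = 2*y+1)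

def Sub (h u : ℕ) : Set ℕ := {v | (∃ j, v / 2^j = u) ∧ v < 2^h}

lemma sub_le {h u v : ℕ} (hv : v ∈ Sub h u) : u ≤ v := by
  obtain ⟨⟨j, hj⟩, _⟩ := hv
  exact hj ▸ Nat.div_le_self v (2^j)

lemma sub_lt {h u v : ℕ} (hv : v ∈ Sub h u) : v < 2^h := hv.2

lemma mem_sub_self {h u : ℕ} (hu : u < 2^h) : u ∈ Sub h u :=
  ⟨⟨0, by simp⟩, hu⟩

lemma sub_subset {h u w : ℕ} (hw : ∃ j, w / 2^j = u) : Sub h w ⊆ Sub h u := by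
  rintro v ⟨⟨i, hi⟩, hv⟩
  obtain ⟨j, hj⟩ := hw
  exact ⟨⟨i + j, by rw [pow_add, ← Nat.div_div_eq_div_mul, hi, hj]⟩, hv⟩

lemma two_le_of_ne {h u v : ℕ} (hu : 1 ≤ u) (hv : v ∈ Sub h u) (hne : v ≠ u) : 2 ≤ v := by
  obtain ⟨⟨j, hj⟩, _⟩ := hv
  rcases Nat.eq_zero_or_pos j with rfl | hj1
  · simp at hj; omega
  · have h1 : u * 2^j ≤ v := by
      rw [← hj]; exact Nat.div_mul_le_self v (2^j)
    have h2 : 2 ≤ 2^j := by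
      calc 2 = 2^1 := rfl
      _ ≤ 2^j := Nat.pow_le_pow_right (by norm_num) hj1
    nlinarith

lemma parent_mem {h u v : ℕ} (hv : v ∈ Sub h u) (hne : v ≠ u) : v / 2 ∈ Sub h u := by
  obtain ⟨⟨j, hj⟩, hlt⟩ := hv
  rcases Nat.eq_zero_or_pos j with rfl | hj1
  · simp at hj; omega
  · refine ⟨⟨j - 1, ?_⟩, lt_of_le_of_lt (Nat.div_le_self _ _) hlt⟩
    rw [Nat.div_div_eq_div_mul, ← pow_succ']
    rw [show j - 1 + 1 = j by omega, hj]

lemma sub_disj_aux {v p q i j : ℕ} (hij : i ≤ j) (hi : v / 2^i = p) (hj : v / 2^j = q)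
    (hne : p ≠ q) (hpq : p < 2*q) : False := by
  have hq : q = p / 2^(j - i) := by
    rw [← hi, Nat.div_div_eq_div_mul, ← pow_add, show i + (j - i) = j by omega, hj]
  rcases Nat.eq_zero_or_pos (j - i) with h0 | h1
  · rw [h0] at hq; simp at hq; omega
  · have h2 : 2 ≤ 2^(j-i) := by
      calc 2 = 2^1 := rfl
      _ ≤ 2^(j-i) := Nat.pow_le_pow_right (by norm_num) h1
    have : p / 2^(j-i) ≤ p / 2 := Nat.div_le_div_left h2 (by norm_num)
    have : q ≤ p / 2 := hq ▸ this
    omega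

lemma sub_disj {h p q v : ℕ} (hqp : q < 2*p) (hpq : p < 2*q) (hne : p ≠ q)
    (h1 : v ∈ Sub h p) (h2 : v ∈ Sub h q) : False := by
  obtain ⟨⟨i, hi⟩, _⟩ := h1
  obtain ⟨⟨j, hj⟩, _⟩ := h2
  rcases le_total i j with hle | hle
  · exact sub_disj_aux hle hi hj hne hpq
  · exact sub_disj_aux hle hj hi (Ne.symm hne) hqp

lemma sub_finite {h u : ℕ} (W : Set ℕ) (hW : W ⊆ Sub h u) : W.Finite :=
  (Set.finite_Iio (2^h)).subset (fun _ hv => (hW hv).2)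

/-- main induction: a heavily loaded time exists in every complete subtree of height `2k` -/
lemma heavy (h : ℕ) (a b : ℕ → ℕ)
    (Hab : ∀ v, 1 ≤ v → v < 2^h → a v ≤ b v)
    (Hov : ∀ p c, 1 ≤ p → c < 2^h → (c = 2*p ∨ c = 2*p+1) →
      ∃ s, a p ≤ s ∧ s ≤ b p ∧ a c ≤ s ∧ s ≤ b c) :
    ∀ k u, 1 ≤ u → (u+1) * 2^(2*k) ≤ 2^h →
      ∃ t, k + 1 ≤ {v | v ∈ Sub h u ∧ a v ≤ t ∧ t ≤ b v}.ncard := by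
  intro k
  induction k with
  | zero =>
    intro u hu hr
    refine ⟨a u, ?_⟩
    have huh : u < 2^h := by simpa using Nat.lt_of_lt_of_le (by omega) hr
    have hs : ({u} : Set ℕ) ⊆ {v | v ∈ Sub h u ∧ a v ≤ a u ∧ a u ≤ b v} :=
      Set.singleton_subset_iff.mpr ⟨mem_sub_self huh, le_refl _, Hab u hu huh⟩
    calc (1:ℕ) = ({u} : Set ℕ).ncard := (Set.ncard_singleton u).symm
    _ ≤ _ := Set.ncard_le_ncard hs (sub_finite _ (fun v hv => hv.1))
  | succ k ih =>
    intro u hu hr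
    have key : (4*u+4) * 2^(2*k) ≤ 2^h := by
      have e : (u+1) * 2^(2*(k+1)) = (4*u+4) * 2^(2*k) := by
        rw [show 2*(k+1) = 2*k + 2 by ring, pow_add]; ring
      omega
    have hp1 : 0 < 2^(2*k) := Nat.pow_pos (by norm_num)
    have hlt : 4*u+4 ≤ 2^h := le_trans (Nat.le_mul_of_pos_right _ hp1) key
    -- the three grandchild subtrees
    obtain ⟨t1, ht1⟩ := ih (4*u) (by omega) (by nlinarith)
    obtain ⟨t2, ht2⟩ := ih (4*u+1) (by omega) (by nlinarith)
    obtain ⟨t3, ht3⟩ := ih (4*u+2) (by omega) (by nlinarith)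
    set H1 := {v | v ∈ Sub h (4*u) ∧ a v ≤ t1 ∧ t1 ≤ b v} with hH1
    set H2 := {v | v ∈ Sub h (4*u+1) ∧ a v ≤ t2 ∧ t2 ≤ b v} with hH2
    set H3 := {v | v ∈ Sub h (4*u+2) ∧ a v ≤ t3 ∧ t3 ≤ b v} with hH3
    -- memberships
    have mu : u ∈ Sub h u := mem_sub_self (by omega)
    have m2u : 2*u ∈ Sub h u := ⟨⟨1, by omega⟩, by omega⟩
    have m2u1 : 2*u+1 ∈ Sub h u := ⟨⟨1, by omega⟩, by omega⟩
    have m4u : 4*u ∈ Sub h u := ⟨⟨2, by omega⟩, by omega⟩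
    have m4u1 : 4*u+1 ∈ Sub h u := ⟨⟨2, by omega⟩, by omega⟩
    have m4u2 : 4*u+2 ∈ Sub h u := ⟨⟨2, by omega⟩, by omega⟩
    have m4u_2u : 4*u ∈ Sub h (2*u) := ⟨⟨1, by omega⟩, by omega⟩
    have m4u1_2u : 4*u+1 ∈ Sub h (2*u) := ⟨⟨1, by omega⟩, by omega⟩
    have m2u_2u : 2*u ∈ Sub h (2*u) := mem_sub_self (by omega)
    have ss1 : Sub h (4*u) ⊆ Sub h u := sub_subset ⟨2, by omega⟩
    have ss2 : Sub h (4*u+1) ⊆ Sub h u := sub_subset ⟨2, by omega⟩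
    have ss3 : Sub h (4*u+2) ⊆ Sub h u := sub_subset ⟨2, by omega⟩
    have s1_2u : Sub h (4*u) ⊆ Sub h (2*u) := sub_subset ⟨1, by omega⟩
    have s2_2u : Sub h (4*u+1) ⊆ Sub h (2*u) := sub_subset ⟨1, by omega⟩
    have s3_2u1 : Sub h (4*u+2) ⊆ Sub h (2*u+1) := sub_subset ⟨1, by omega⟩
    have d01 : ∀ v, v ∈ Sub h (4*u) → v ∈ Sub h (4*u+1) → False :=
      fun v => sub_disj (by omega) (by omega) (by omega)
    have d02 : ∀ v, v ∈ Sub h (4*u) → v ∈ Sub h (4*u+2) → False :=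
      fun v => sub_disj (by omega) (by omega) (by omega)
    have d12 : ∀ v, v ∈ Sub h (4*u+1) → v ∈ Sub h (4*u+2) → False :=
      fun v => sub_disj (by omega) (by omega) (by omega)
    have dsib : ∀ v, v ∈ Sub h (2*u) → v ∈ Sub h (2*u+1) → False :=
      fun v => sub_disj (by omega) (by omega) (by omega)
    -- generic side lemmas
    have adjL : ∀ (tm : ℕ) (Cm : Set ℕ),
        (∀ w, w ∈ Sub h u → w ∉ Cm → ¬(a w ≤ tm ∧ tm ≤ b w)) →
        ∀ p c, p ∈ Sub h u → c ∈ Sub h u → p ∉ Cm → c ∉ Cm →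
          (c = 2*p ∨ c = 2*p+1) → (b p < tm ↔ b c < tm) := by
      intro tm Cm NW p c hpS hcS hpC hcC hch
      have hp1 : 1 ≤ p := le_trans hu (sub_le hpS)
      have hc1 : 1 ≤ c := le_trans hu (sub_le hcS)
      obtain ⟨s, hs1, hs2, hs3, hs4⟩ := Hov p c hp1 (sub_lt hcS) hch
      have hap : a p ≤ b p := Hab p hp1 (sub_lt hpS)
      have hac : a c ≤ b c := Hab c hc1 (sub_lt hcS)
      have dp : b p < tm ∨ tm < a p := by
        have := NW p hpS hpC; by_contra hcon; push_neg at hcon; exact this ⟨by omega, by omega⟩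
      have dc : b c < tm ∨ tm < a c := by
        have := NW c hcS hcC; by_contra hcon; push_neg at hcon; exact this ⟨by omega, by omega⟩
      omega
    have subL : ∀ (tm : ℕ) (Cm : Set ℕ),
        (∀ w, w ∈ Sub h u → w ∉ Cm → ¬(a w ≤ tm ∧ tm ≤ b w)) →
        ∀ (w : ℕ), Sub h w ⊆ Sub h u → (∀ z, z ∈ Sub h w → z ∉ Cm) →
        ∀ v, v ∈ Sub h w → (b v < tm ↔ b w < tm) := by
      intro tm Cm NW w hwu hwC v
      induction v using Nat.strong_induction_on with
      | _ v ihv =>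
        intro hv
        by_cases hvw : v = w
        · subst hvw; exact Iff.rfl
        · have hw1 : 1 ≤ w := by
            have : w ∈ Sub h w := mem_sub_self (lt_of_le_of_lt (sub_le hv) (sub_lt hv))
            exact le_trans hu (sub_le (hwu this))
          have h2v : 2 ≤ v := two_le_of_ne hw1 hv hvw
          have hp : v/2 ∈ Sub h w := parent_mem hv hvw
          have step := adjL tm Cm NW (v/2) v (hwu hp) (hwu hv) (hwC _ hp) (hwC _ hv)
            (by omega)
          have hrec := ihv (v/2) (by omega) hp
          omega
    -- core counting argument
    have core : ∀ (tm : ℕ) (Cm Hm : Set ℕ) (x y : ℕ),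
        Hm ⊆ Sub h u → Hm ⊆ Cm → k + 1 ≤ Hm.ncard →
        (∀ v, v ∈ Hm → a v ≤ tm ∧ tm ≤ b v) →
        x ∈ Sub h u → x ∉ Cm → a x ≤ tm →
        y ∈ Sub h u → y ∉ Cm → tm ≤ b y →
        ((∀ w, w ∈ Sub h u → w ∉ Cm → ¬(a w ≤ tm ∧ tm ≤ b w)) →
          (b x < tm ↔ b y < tm)) →
        ∃ t, k + 1 + 1 ≤ {v | v ∈ Sub h u ∧ a v ≤ t ∧ t ≤ b v}.ncard := by
      intro tm Cm Hm x y hmS hmC hmcard hmval hxS hxC hxa hyS hyC hyb conn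
      by_cases hW : ∃ w, w ∈ Sub h u ∧ w ∉ Cm ∧ a w ≤ tm ∧ tm ≤ b w
      · obtain ⟨w, hwS, hwC, hwa, hwb⟩ := hW
        refine ⟨tm, ?_⟩
        have hmfin : Hm.Finite := sub_finite _ hmS
        have hwn : w ∉ Hm := fun hc => hwC (hmC hc)
        have hsub : insert w Hm ⊆ {v | v ∈ Sub h u ∧ a v ≤ tm ∧ tm ≤ b v} := by
          rintro z (rfl | hz)
          · exact ⟨hwS, hwa, hwb⟩
          · exact ⟨hmS hz, hmval z hz⟩
        calc k + 1 + 1 ≤ Hm.ncard + 1 := by omega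
        _ = (insert w Hm).ncard := (Set.ncard_insert_of_notMem hwn hmfin).symm
        _ ≤ _ := Set.ncard_le_ncard hsub (sub_finite _ (fun v hv => hv.1))
      · have NW : ∀ w, w ∈ Sub h u → w ∉ Cm → ¬(a w ≤ tm ∧ tm ≤ b w) :=
          fun w h1 h2 h3 => hW ⟨w, h1, h2, h3.1, h3.2⟩
        have hx' : b x < tm := by
          by_contra hcon; exact NW x hxS hxC ⟨hxa, by omega⟩
        have := conn NW
        exact absurd hyb (by omega)
    -- non-membership facts
    have n1_u : u ∉ Sub h (4*u) := fun hc => by have := sub_le hc; omega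
    have n1_2u : 2*u ∉ Sub h (4*u) := fun hc => by have := sub_le hc; omega
    have n1_2u1 : 2*u+1 ∉ Sub h (4*u) := fun hc => by have := sub_le hc; omega
    have n1_4u1 : 4*u+1 ∉ Sub h (4*u) := fun hc => d01 _ hc (mem_sub_self (by omega))
    have n1_4u2 : 4*u+2 ∉ Sub h (4*u) := fun hc => d02 _ hc (mem_sub_self (by omega))
    have n2_u : u ∉ Sub h (4*u+1) := fun hc => by have := sub_le hc; omega
    have n2_2u : 2*u ∉ Sub h (4*u+1) := fun hc => by have := sub_le hc; omega
    have n2_2u1 : 2*u+1 ∉ Sub h (4*u+1) := fun hc => by have := sub_le hc; omega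
    have n2_4u : 4*u ∉ Sub h (4*u+1) := fun hc => d01 _ (mem_sub_self (by omega)) hc
    have n2_4u2 : 4*u+2 ∉ Sub h (4*u+1) := fun hc => d12 _ hc (mem_sub_self (by omega))
    have n3_2u : 2*u ∉ Sub h u \ Sub h (2*u) := fun hc => hc.2 m2u_2u
    have n3_4u : 4*u ∉ Sub h u \ Sub h (2*u) := fun hc => hc.2 m4u_2u
    have n3_4u1 : 4*u+1 ∉ Sub h u \ Sub h (2*u) := fun hc => hc.2 m4u1_2u
    -- middle = H2
    have fin2 : ∀ x y, (x ∈ Sub h (4*u) ∪ Sub h (4*u+2)) → (y ∈ Sub h (4*u) ∪ Sub h (4*u+2)) →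
        a x ≤ t2 → t2 ≤ b y → ∃ t, k+1+1 ≤ {v | v ∈ Sub h u ∧ a v ≤ t ∧ t ≤ b v}.ncard := by
      intro x y hx hy hxa hyb
      have hS : ∀ z, z ∈ Sub h (4*u) ∪ Sub h (4*u+2) → z ∈ Sub h u := by
        rintro z (hz | hz)
        exacts [ss1 hz, ss3 hz]
      have hC : ∀ z, z ∈ Sub h (4*u) ∪ Sub h (4*u+2) → z ∉ Sub h (4*u+1) := by
        rintro z (hz | hz) hc
        exacts [d01 z hz hc, d12 z hc hz]
      have conn2 : (∀ w, w ∈ Sub h u → w ∉ Sub h (4*u+1) → ¬(a w ≤ t2 ∧ t2 ≤ b w)) →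
          ∀ z, z ∈ Sub h (4*u) ∪ Sub h (4*u+2) → (b z < t2 ↔ b u < t2) := by
        intro NW z hz
        have e2 : b (2*u) < t2 ↔ b (4*u) < t2 :=
          adjL t2 _ NW (2*u) (4*u) m2u m4u n2_2u n2_4u (by omega)
        have e3 : b u < t2 ↔ b (2*u) < t2 :=
          adjL t2 _ NW u (2*u) mu m2u n2_u n2_2u (by omega)
        have e4 : b u < t2 ↔ b (2*u+1) < t2 :=
          adjL t2 _ NW u (2*u+1) mu m2u1 n2_u n2_2u1 (by omega)
        have e5 : b (2*u+1) < t2 ↔ b (4*u+2) < t2 :=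
          adjL t2 _ NW (2*u+1) (4*u+2) m2u1 m4u2 n2_2u1 n2_4u2 (by omega)
        rcases hz with hz | hz
        · have e1 := subL t2 _ NW (4*u) ss1 (fun z hz hc => d01 z hz hc) z hz
          omega
        · have e1 := subL t2 _ NW (4*u+2) ss3 (fun z hz hc => d12 z hc hz) z hz
          omega
      exact core t2 (Sub h (4*u+1)) H2 x y (fun v hv => ss2 hv.1) (fun v hv => hv.1) ht2
        (fun v hv => ⟨hv.2.1, hv.2.2⟩) (hS x hx) (hC x hx) hxa (hS y hy) (hC y hy) hyb
        (fun NW => (conn2 NW x hx).trans ((conn2 NW y hy).symm))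
    -- middle = H1
    have fin1 : ∀ x y, (x ∈ Sub h (4*u+1) ∪ Sub h (4*u+2)) → (y ∈ Sub h (4*u+1) ∪ Sub h (4*u+2)) →
        a x ≤ t1 → t1 ≤ b y → ∃ t, k+1+1 ≤ {v | v ∈ Sub h u ∧ a v ≤ t ∧ t ≤ b v}.ncard := by
      intro x y hx hy hxa hyb
      have hS : ∀ z, z ∈ Sub h (4*u+1) ∪ Sub h (4*u+2) → z ∈ Sub h u := by
        rintro z (hz | hz)
        exacts [ss2 hz, ss3 hz]
      have hC : ∀ z, z ∈ Sub h (4*u+1) ∪ Sub h (4*u+2) → z ∉ Sub h (4*u) := by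
        rintro z (hz | hz) hc
        exacts [d01 z hc hz, d02 z hc hz]
      have conn1 : (∀ w, w ∈ Sub h u → w ∉ Sub h (4*u) → ¬(a w ≤ t1 ∧ t1 ≤ b w)) →
          ∀ z, z ∈ Sub h (4*u+1) ∪ Sub h (4*u+2) → (b z < t1 ↔ b u < t1) := by
        intro NW z hz
        have e2 : b (2*u) < t1 ↔ b (4*u+1) < t1 :=
          adjL t1 _ NW (2*u) (4*u+1) m2u m4u1 n1_2u n1_4u1 (by omega)
        have e3 : b u < t1 ↔ b (2*u) < t1 :=
          adjL t1 _ NW u (2*u) mu m2u n1_u n1_2u (by omega)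
        have e4 : b u < t1 ↔ b (2*u+1) < t1 :=
          adjL t1 _ NW u (2*u+1) mu m2u1 n1_u n1_2u1 (by omega)
        have e5 : b (2*u+1) < t1 ↔ b (4*u+2) < t1 :=
          adjL t1 _ NW (2*u+1) (4*u+2) m2u1 m4u2 n1_2u1 n1_4u2 (by omega)
        rcases hz with hz | hz
        · have e1 := subL t1 _ NW (4*u+1) ss2 (fun z hz hc => d01 z hc hz) z hz
          omega
        · have e1 := subL t1 _ NW (4*u+2) ss3 (fun z hz hc => d02 z hc hz) z hz
          omega
      exact core t1 (Sub h (4*u)) H1 x y (fun v hv => ss1 hv.1) (fun v hv => hv.1) ht1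
        (fun v hv => ⟨hv.2.1, hv.2.2⟩) (hS x hx) (hC x hx) hxa (hS y hy) (hC y hy) hyb
        (fun NW => (conn1 NW x hx).trans ((conn1 NW y hy).symm))
    -- middle = H3
    have fin3 : ∀ x y, (x ∈ Sub h (4*u) ∪ Sub h (4*u+1)) → (y ∈ Sub h (4*u) ∪ Sub h (4*u+1)) →
        a x ≤ t3 → t3 ≤ b y → ∃ t, k+1+1 ≤ {v | v ∈ Sub h u ∧ a v ≤ t ∧ t ≤ b v}.ncard := by
      intro x y hx hy hxa hyb
      have hS : ∀ z, z ∈ Sub h (4*u) ∪ Sub h (4*u+1) → z ∈ Sub h u := by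
        rintro z (hz | hz)
        exacts [ss1 hz, ss2 hz]
      have hC : ∀ z, z ∈ Sub h (4*u) ∪ Sub h (4*u+1) → z ∉ Sub h u \ Sub h (2*u) := by
        rintro z (hz | hz) hc
        exacts [hc.2 (s1_2u hz), hc.2 (s2_2u hz)]
      have conn3 : (∀ w, w ∈ Sub h u → w ∉ Sub h u \ Sub h (2*u) → ¬(a w ≤ t3 ∧ t3 ≤ b w)) →
          ∀ z, z ∈ Sub h (4*u) ∪ Sub h (4*u+1) → (b z < t3 ↔ b (2*u) < t3) := by
        intro NW z hz
        have e2 : b (2*u) < t3 ↔ b (4*u) < t3 :=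
          adjL t3 _ NW (2*u) (4*u) m2u m4u n3_2u n3_4u (by omega)
        have e3 : b (2*u) < t3 ↔ b (4*u+1) < t3 :=
          adjL t3 _ NW (2*u) (4*u+1) m2u m4u1 n3_2u n3_4u1 (by omega)
        rcases hz with hz | hz
        · have e1 := subL t3 _ NW (4*u) ss1 (fun z hz hc => hc.2 (s1_2u hz)) z hz
          omega
        · have e1 := subL t3 _ NW (4*u+1) ss2 (fun z hz hc => hc.2 (s2_2u hz)) z hz
          omega
      exact core t3 (Sub h u \ Sub h (2*u)) H3 x y (fun v hv => ss3 hv.1)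
        (fun v hv => ⟨ss3 hv.1, fun hc => dsib v hc (s3_2u1 hv.1)⟩) ht3
        (fun v hv => ⟨hv.2.1, hv.2.2⟩) (hS x hx) (hC x hx) hxa (hS y hy) (hC y hy) hyb
        (fun NW => (conn3 NW x hx).trans ((conn3 NW y hy).symm))
    have ne1 : H1.Nonempty := Set.nonempty_of_ncard_ne_zero (by omega)
    have ne2 : H2.Nonempty := Set.nonempty_of_ncard_ne_zero (by omega)
    have ne3 : H3.Nonempty := Set.nonempty_of_ncard_ne_zero (by omega)
    rcases le_total t1 t2 with h12 | h21
    · rcases le_total t2 t3 with h23 | h32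
      · obtain ⟨x, hx⟩ := ne1
        obtain ⟨y, hy⟩ := ne3
        exact fin2 x y (Or.inl hx.1) (Or.inr hy.1) (le_trans hx.2.1 h12) (le_trans h23 hy.2.2)
      · rcases le_total t1 t3 with h13 | h31
        · obtain ⟨x, hx⟩ := ne1
          obtain ⟨y, hy⟩ := ne2
          exact fin3 x y (Or.inl hx.1) (Or.inr hy.1) (le_trans hx.2.1 h13) (le_trans h32 hy.2.2)
        · obtain ⟨x, hx⟩ := ne3
          obtain ⟨y, hy⟩ := ne2
          exact fin1 x y (Or.inr hx.1) (Or.inl hy.1) (le_trans hx.2.1 h31) (le_trans h12 hy.2.2)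
    · rcases le_total t1 t3 with h13 | h31
      · obtain ⟨x, hx⟩ := ne2
        obtain ⟨y, hy⟩ := ne3
        exact fin1 x y (Or.inl hx.1) (Or.inr hy.1) (le_trans hx.2.1 h21) (le_trans h13 hy.2.2)
      · rcases le_total t2 t3 with h23 | h32
        · obtain ⟨x, hx⟩ := ne2
          obtain ⟨y, hy⟩ := ne1
          exact fin3 x y (Or.inr hx.1) (Or.inl hy.1) (le_trans hx.2.1 h23) (le_trans h31 hy.2.2)
        · obtain ⟨x, hx⟩ := ne3
          obtain ⟨y, hy⟩ := ne1
          exact fin2 x y (Or.inr hx.1) (Or.inl hy.1) (le_trans hx.2.1 h32) (le_trans h21 hy.2.2)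

lemma zig (n : ℕ) :
    IsZTopOrdering {e : Fin n × Fin n | adjN ((e.1 : ℕ)+1) ((e.2 : ℕ)+1)} (Equiv.refl _) 2 := by
  classical
  rintro p m ⟨inj, hedge⟩ i
  set g : ℕ → ℕ := fun j => (p j : ℕ) + 1 with hgdef
  have hgpos : ∀ j, 1 ≤ g j := fun j => by simp [hgdef]
  set Down : ℕ → Prop := fun j => g (j+1) = 2 * g j ∨ g (j+1) = 2 * g j + 1 with hDdef
  have hud : ∀ j, j < m → Down j ∨ (g j = 2 * g (j+1) ∨ g j = 2 * g (j+1) + 1) := by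
    intro j hj
    have := hedge j hj
    simpa [adjN, hDdef, hgdef] using this
  have hinj : ∀ j k, j ≤ m → k ≤ m → g j = g k → j = k := by
    intro j k hjm hkm he
    refine inj j k hjm hkm (Fin.ext ?_)
    simp only [hgdef] at he
    omega
  have prop : ∀ j, j + 1 < m → Down j → Down (j+1) := by
    intro j hj hdj
    by_contra hnd
    have hup := (hud (j+1) (by omega)).resolve_left hnd
    have heq : g (j+1+1) = g j := by
      have h3 := hgpos (j+1)
      rcases hdj with h | h <;> rcases hup with h' | h' <;> omega
    have := hinj (j+1+1) j (by omega) (by omega) heq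
    omega
  -- valley position T
  obtain ⟨T, hTm, hA, hB⟩ : ∃ T, T ≤ m ∧ (∀ j, j < m → T ≤ j → Down j) ∧
      (∀ j, j < m → j < T → ¬ Down j) := by
    by_cases hD : ∃ j, j < m ∧ Down j
    · refine ⟨Nat.find hD, (Nat.find_spec hD).1.le, ?_, ?_⟩
      · intro j hj hTj
        revert hj
        induction j, hTj using Nat.le_induction with
        | base => exact fun _ => (Nat.find_spec hD).2
        | succ l hl ihl =>
          exact fun hj => prop l hj (ihl (by omega))
      · intro j hj hjT hd
        exact Nat.find_min hD hjT ⟨hj, hd⟩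
    · exact ⟨m, le_refl m, fun j hj hTj => absurd hj (by omega),
        fun j hj _ hd => hD ⟨j, hj, hd⟩⟩
  have dec : ∀ j l, j ≤ l → l ≤ T → g l ≤ g j := by
    intro j l hjl
    induction l, hjl using Nat.le_induction with
    | base => intro; exact le_refl _
    | succ l hl ihl =>
      intro hlT
      have hlm : l < m := by omega
      have hnd : ¬ Down l := hB l hlm (by omega)
      have hup := (hud l hlm).resolve_left hnd
      have h1 := hgpos (l+1)
      have h2 := ihl (by omega)
      omega
  have inc : ∀ j l, T ≤ j → j ≤ l → l ≤ m → g j ≤ g l := by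
    intro j l hTj hjl
    induction l, hjl using Nat.le_induction with
    | base => intro; exact le_refl _
    | succ l hl ihl =>
      intro hlm
      have hd : Down l := hA l (by omega) (by omega)
      have h1 := hgpos l
      have h2 := ihl (by omega)
      rcases hd with h | h <;> omega
  -- at most one crossing on each side of T
  have main : ∀ j1 j2, j1 < j2 → j2 < m →
      InCut (fun v => ((Equiv.refl (Fin n)) v : ℕ)) i (p j1) (p (j1 + 1)) →
      InCut (fun v => ((Equiv.refl (Fin n)) v : ℕ)) i (p j2) (p (j2 + 1)) →
      (j1 < T ↔ j2 < T) → False := by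
    intro j1 j2 hlt hj2m hc1 hc2 hiff
    simp only [InCut, Equiv.refl_apply] at hc1 hc2
    have e1 : g j1 = (p j1 : ℕ) + 1 := rfl
    have e2 : g (j1+1) = (p (j1+1) : ℕ) + 1 := rfl
    have e3 : g j2 = (p j2 : ℕ) + 1 := rfl
    have e4 : g (j2+1) = (p (j2+1) : ℕ) + 1 := rfl
    by_cases hs : j1 < T
    · have hs2 : j2 < T := hiff.mp hs
      have d1 : g (j1+1) ≤ g j1 := dec j1 (j1+1) (by omega) (by omega)
      have d2 : g (j2+1) ≤ g j2 := dec j2 (j2+1) (by omega) (by omega)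
      have d3 : g j2 ≤ g (j1+1) := dec (j1+1) j2 (by omega) (by omega)
      omega
    · have hs2 : ¬ j2 < T := fun h => hs (hiff.mpr h)
      have i1 : g j1 ≤ g (j1+1) := inc j1 (j1+1) (by omega) (by omega) (by omega)
      have i2 : g j2 ≤ g (j2+1) := inc j2 (j2+1) (by omega) (by omega) (by omega)
      have i3 : g (j1+1) ≤ g j2 := inc (j1+1) j2 (by omega) (by omega) (by omega)
      omega
  have count : Nat.card {j : ℕ // j < m ∧
      InCut (fun v => ((Equiv.refl (Fin n)) v : ℕ)) i (p j) (p (j + 1))} ≤ Nat.card Bool := by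
    apply Nat.card_le_card_of_injective (fun x => decide (x.1 < T))
    rintro ⟨j1, hj1, hc1⟩ ⟨j2, hj2, hc2⟩ hb
    simp only [decide_eq_decide] at hb
    simp only [Subtype.mk.injEq]
    rcases lt_trichotomy j1 j2 with h | h | h
    · exact absurd (main j1 j2 h hj2 hc1 hc2 hb) (by simp)
    · exact h
    · exact absurd (main j2 j1 h hj1 hc2 hc1 hb.symm) (by simp)
  simpa using count

end ZZTree

/-- Digraphs of zig-zag number at most `2` have unbounded directed path-width:
for every `d` there is a digraph admitting a `2`-topological ordering but no
directed path decomposition of width at most `d`. -/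
theorem zigzag_two_unbounded_directed_pathwidth :
    ∀ d : ℕ, ∃ (n : ℕ) (E : Set (Fin n × Fin n)),
      (∃ ω : Fin n ≃ Fin n, IsZTopOrdering E ω 2) ∧
      ¬ ∃ (q : ℕ) (X : Fin q → Finset (Fin n)),
          (∀ v : Fin n, ∃ j, v ∈ X j) ∧
          (∀ i j k : Fin q, i < j → j < k → X i ∩ X k ⊆ X j) ∧
          (∀ e ∈ E, ∃ i j : Fin q, i ≤ j ∧ e.1 ∈ X i ∧ e.2 ∈ X j) ∧
          (∀ j : Fin q, (X j).card ≤ d) := by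
  classical
  intro d
  have hpow : 2 ≤ 2^(2*d+1) := by
    calc (2:ℕ) = 2^1 := rfl
    _ ≤ 2^(2*d+1) := Nat.pow_le_pow_right (by norm_num) (by omega)
  refine ⟨2^(2*d+1) - 1,
    {e | ZZTree.adjN ((e.1 : ℕ)+1) ((e.2 : ℕ)+1)}, ⟨Equiv.refl _, ZZTree.zig _⟩, ?_⟩
  rintro ⟨q, X, hcov, hconv, hedge, hwid⟩
  have hn0 : 0 < 2^(2*d+1) - 1 := by omega
  set vert : ℕ → Fin (2^(2*d+1) - 1) :=
    fun v => ⟨(v - 1) % (2^(2*d+1) - 1), Nat.mod_lt _ hn0⟩ with hvertdef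
  have hvert : ∀ v, 1 ≤ v → v < 2^(2*d+1) → (vert v : ℕ) = v - 1 := by
    intro v h1 h2
    simp only [hvertdef]
    exact Nat.mod_eq_of_lt (by omega)
  set J : ℕ → Finset (Fin q) := fun v => Finset.univ.filter (fun j => vert v ∈ X j) with hJdef
  have hJne : ∀ v, (J v).Nonempty := by
    intro v
    obtain ⟨j, hj⟩ := hcov (vert v)
    exact ⟨j, by simp [hJdef, hj]⟩
  set a : ℕ → ℕ := fun v => (((J v).min' (hJne v) : Fin q) : ℕ) with hadef
  set b : ℕ → ℕ := fun v => (((J v).max' (hJne v) : Fin q) : ℕ) with hbdef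
  have hmem_a : ∀ v (j : Fin q), vert v ∈ X j → a v ≤ (j:ℕ) :=
    fun v j hj => Finset.min'_le (J v) j (by simp [hJdef, hj])
  have hmem_b : ∀ v (j : Fin q), vert v ∈ X j → (j:ℕ) ≤ b v :=
    fun v j hj => Finset.le_max' (J v) j (by simp [hJdef, hj])
  have hmin_mem : ∀ v, vert v ∈ X ((J v).min' (hJne v)) := by
    intro v
    have := Finset.min'_mem (J v) (hJne v)
    simpa [hJdef] using this
  have hmax_mem : ∀ v, vert v ∈ X ((J v).max' (hJne v)) := by
    intro v
    have := Finset.max'_mem (J v) (hJne v)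
    simpa [hJdef] using this
  have Hab : ∀ v, 1 ≤ v → v < 2^(2*d+1) → a v ≤ b v :=
    fun v _ _ => hmem_b v _ (hmin_mem v)
  have Hov : ∀ pp cc, 1 ≤ pp → cc < 2^(2*d+1) → (cc = 2*pp ∨ cc = 2*pp+1) →
      ∃ s, a pp ≤ s ∧ s ≤ b pp ∧ a cc ≤ s ∧ s ≤ b cc := by
    intro pp cc h1 h2 hch
    have hp2 : pp < 2^(2*d+1) := by omega
    have hc1 : 1 ≤ cc := by omega
    have hpe : ((vert pp : ℕ)) + 1 = pp := by rw [hvert pp h1 hp2]; omega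
    have hce : ((vert cc : ℕ)) + 1 = cc := by rw [hvert cc hc1 h2]; omega
    have he1 : (vert pp, vert cc) ∈
        {e : Fin (2^(2*d+1) - 1) × Fin (2^(2*d+1) - 1) | ZZTree.adjN ((e.1 : ℕ)+1) ((e.2 : ℕ)+1)} := by
      simp only [Set.mem_setOf_eq, hpe, hce]
      exact Or.inl hch
    have he2 : (vert cc, vert pp) ∈
        {e : Fin (2^(2*d+1) - 1) × Fin (2^(2*d+1) - 1) | ZZTree.adjN ((e.1 : ℕ)+1) ((e.2 : ℕ)+1)} := by
      simp only [Set.mem_setOf_eq, hpe, hce]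
      exact Or.inr hch
    obtain ⟨i1, j1, hij1, hm1, hm2⟩ := hedge _ he1
    obtain ⟨i2, j2, hij2, hm3, hm4⟩ := hedge _ he2
    have h3 := hmem_a pp i1 hm1
    have h4 := hmem_b cc j1 hm2
    have h5 := hmem_a cc i2 hm3
    have h6 := hmem_b pp j2 hm4
    have h7 : (i1:ℕ) ≤ (j1:ℕ) := hij1
    have h8 : (i2:ℕ) ≤ (j2:ℕ) := hij2
    have h9 := Hab pp h1 hp2
    have h10 := Hab cc hc1 h2
    refine ⟨max (a pp) (a cc), le_max_left _ _, by omega, le_max_right _ _, by omega⟩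
  obtain ⟨t, ht⟩ := ZZTree.heavy (2*d+1) a b Hab Hov d 1 (le_refl 1)
    (by
      have : (2:ℕ)^(2*d+1) = 2^(2*d) * 2 := pow_succ 2 (2*d)
      omega)
  set W := {v | v ∈ ZZTree.Sub (2*d+1) 1 ∧ a v ≤ t ∧ t ≤ b v} with hW
  have hWfin : W.Finite := ZZTree.sub_finite _ (fun v hv => hv.1)
  have hWne : W.Nonempty := Set.nonempty_of_ncard_ne_zero (by omega)
  obtain ⟨v0, hv0⟩ := hWne
  have htq : t < q := by
    have h1 : b v0 < q := ((J v0).max' (hJne v0)).isLt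
    have h2 : t ≤ b v0 := hv0.2.2
    omega
  have hbag : ∀ v, v ∈ W → vert v ∈ X ⟨t, htq⟩ := by
    intro v hv
    obtain ⟨hvS, hva, hvb⟩ := hv
    rcases eq_or_lt_of_le (show a v ≤ t from hva) with he | hlt1
    · have : (J v).min' (hJne v) = ⟨t, htq⟩ := Fin.ext he
      exact this ▸ hmin_mem v
    · rcases eq_or_lt_of_le (show t ≤ b v from hvb) with he | hlt2
      · have : (J v).max' (hJne v) = ⟨t, htq⟩ := Fin.ext he.symm
        exact this ▸ hmax_mem v
      · refine hconv ((J v).min' (hJne v)) ⟨t, htq⟩ ((J v).max' (hJne v)) ?_ ?_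
          (Finset.mem_inter.mpr ⟨hmin_mem v, hmax_mem v⟩)
        · exact Fin.lt_def.mpr hlt1
        · exact Fin.lt_def.mpr hlt2
  have hinjW : Set.InjOn vert W := by
    intro x hx y hy he
    have hx1 : 1 ≤ x := ZZTree.sub_le hx.1
    have hy1 : 1 ≤ y := ZZTree.sub_le hy.1
    have hxl : x < 2^(2*d+1) := ZZTree.sub_lt hx.1
    have hyl : y < 2^(2*d+1) := ZZTree.sub_lt hy.1
    have := congrArg Fin.val he
    rw [hvert x hx1 hxl, hvert y hy1 hyl] at this
    omega
  have hcount : d + 1 ≤ (X ⟨t, htq⟩).card := by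
    calc d + 1 ≤ W.ncard := ht
    _ = (vert '' W).ncard := (Set.ncard_image_of_injOn hinjW).symm
    _ ≤ ((X ⟨t, htq⟩ : Finset (Fin (2^(2*d+1) - 1))) : Set (Fin (2^(2*d+1) - 1))).ncard := by
        refine Set.ncard_le_ncard ?_ (Finset.finite_toSet _)
        rintro z ⟨v, hv, rfl⟩
        exact hbag v hv
    _ = (X ⟨t, htq⟩).card := Set.ncard_coe_finset _
  have := hwid ⟨t, htq⟩
  omega
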